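/- Fix n ≥ 1, offsets c_0,…,c_{n−1} ∈ ℤ pairwise incongruent mod n, and an n-tuple T of semistandard skew tableaux. Suppose some component contains cells x and y in the same column with y directly below x, and T(x) = r, T(y) = r + 1 (so diag(x) = diag(y) + n). Then for every cell z of T with entry T(z) ∈ {r, r+1} and diag(y) < diag(z) < diag(x), exactly one of the two pairs {x, z} and {y, z} forms an inversion of T, regardless of whether T(z) = r or T(z) = r + 1. -/
import Mathlib


open Finset MvPolynomial

attribute [local instance] Classical.propDecidable

noncomputable section

/-- A skew shape `λ/μ`: a pair of Young diagrams with `μ ⊆ λ`. -/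
structure SkewShape where
  outer : YoungDiagram
  inner : YoungDiagram
  le : inner ≤ outer

/-- The cells of a skew shape: cells of `λ` not in `μ`. -/
def SkewShape.cells (sh : SkewShape) : Finset (ℕ × ℕ) :=
  sh.outer.cells \ sh.inner.cells

/-- A horizontal strip has at most one cell in every column. -/
def SkewShape.IsHorizontalStrip (sh : SkewShape) : Prop :=
  ∀ i₁ i₂ j : ℕ, (i₁, j) ∈ sh.cells → (i₂, j) ∈ sh.cells → i₁ = i₂

variable {n : ℕ}

/-- The cells of an `n`-tuple of skew shapes, tagged by component. -/
def allCells (sh : Fin n → SkewShape) : Finset (Fin n × ℕ × ℕ) :=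
  Finset.univ.biUnion fun k =>
    (sh k).cells.map ⟨fun s => (k, s), fun _ _ h => congrArg Prod.snd h⟩

/-- The diagonal of a cell in row `i`, column `j` of component `k` is `n(j-i) + c k`. -/
def diag (c : Fin n → ℤ) (p : Fin n × ℕ × ℕ) : ℤ :=
  (n : ℤ) * ((p.2.2 : ℤ) - (p.2.1 : ℤ)) + c p.1

/-- `f` is a semistandard filling of the tuple of skew shapes: entries are positive on
cells and zero elsewhere, rows weakly increase and columns strictly increase. -/
def IsSSYT (sh : Fin n → SkewShape) (f : Fin n × ℕ × ℕ → ℕ) : Prop :=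
  (∀ p ∈ allCells sh, 1 ≤ f p) ∧
  (∀ p, p ∉ allCells sh → f p = 0) ∧
  (∀ (k : Fin n) (i j₁ j₂ : ℕ), j₁ ≤ j₂ → (k, i, j₁) ∈ allCells sh →
      (k, i, j₂) ∈ allCells sh → f (k, i, j₁) ≤ f (k, i, j₂)) ∧
  (∀ (k : Fin n) (i₁ i₂ j : ℕ), i₁ < i₂ → (k, i₁, j) ∈ allCells sh →
      (k, i₂, j) ∈ allCells sh → f (k, i₁, j) < f (k, i₂, j))

/-- The finset of semistandard fillings of the tuple of shapes with entries in `{1,…,m}`. -/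
def Tabs (sh : Fin n → SkewShape) (m : ℕ) : Finset (Fin n × ℕ × ℕ → ℕ) :=
  (((allCells sh).pi fun _ => Finset.Icc 1 m).image
      fun g p => if h : p ∈ allCells sh then g p h else 0).filter (IsSSYT sh)

/-- The number of inversions of a filling: pairs of cells `x, y` with
`f x < f y` and `0 < diag x - diag y < n`. -/
def inv (sh : Fin n → SkewShape) (c : Fin n → ℤ) (f : Fin n × ℕ × ℕ → ℕ) : ℕ :=
  ((allCells sh ×ˢ allCells sh).filter fun pq =>
    f pq.1 < f pq.2 ∧ 0 < diag c pq.1 - diag c pq.2 ∧ diag c pq.1 - diag c pq.2 < n).card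

/-- The number of cells with entry `i`. -/
def wt (sh : Fin n → SkewShape) (f : Fin n × ℕ × ℕ → ℕ) (i : ℕ) : ℕ :=
  ((allCells sh).filter fun p => f p = i).card

/-- The inversion generating function `Σ_T q^{inv T} x^T` in `ℤ[q][x₁,…,x_m]`. -/
def G (sh : Fin n → SkewShape) (c : Fin n → ℤ) (m : ℕ) :
    MvPolynomial (Fin m) (Polynomial ℤ) :=
  ∑ f ∈ Tabs sh m, MvPolynomial.C (Polynomial.X ^ inv sh c f) *
    ∏ i : Fin m, MvPolynomial.X i ^ wt sh f ((i : ℕ) + 1)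

end

/-- The ordered pair `(p, q)` is an inversion of `f`: `f p < f q` and
`0 < diag p - diag q < n`. -/
def IsInvPair (c : Fin n → ℤ) (f : Fin n × ℕ × ℕ → ℕ) (p q : Fin n × ℕ × ℕ) : Prop :=
  f p < f q ∧ 0 < diag c p - diag c q ∧ diag c p - diag c q < n

/-- if a component of `T` contains a cell `x` with entry `r` with the cell `y`
directly below it carrying entry `r+1`, then for every cell `z` with entry `r` or `r+1` and
`diag y < diag z < diag x`, exactly one of the pairs `{x, z}` and `{y, z}` is an
inversion of `T`. -/
theorem stmt3 (n : ℕ) (hn : 1 ≤ n) (c : Fin n → ℤ)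
    (hc : ∀ k l : Fin n, k ≠ l → c k % (n : ℤ) ≠ c l % (n : ℤ))
    (sh : Fin n → SkewShape) (f : Fin n × ℕ × ℕ → ℕ) (hf : IsSSYT sh f)
    (k : Fin n) (i j r : ℕ)
    (hx : (k, i, j) ∈ allCells sh) (hy : (k, i + 1, j) ∈ allCells sh)
    (hfx : f (k, i, j) = r) (hfy : f (k, i + 1, j) = r + 1)
    (z : Fin n × ℕ × ℕ) (hz : z ∈ allCells sh)
    (hfz : f z = r ∨ f z = r + 1)
    (hd₁ : diag c (k, i + 1, j) < diag c z) (hd₂ : diag c z < diag c (k, i, j)) :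
    Xor' (IsInvPair c f (k, i, j) z ∨ IsInvPair c f z (k, i, j))
         (IsInvPair c f (k, i + 1, j) z ∨ IsInvPair c f z (k, i + 1, j)) := by
  have hdxy : diag c (k, i, j) = diag c (k, i + 1, j) + n := by
    unfold _root_.diag; push_cast; ring
  rcases hfz with h | h
  · -- f z = r: (z, y) is an inversion, neither pair with x is
    refine Or.inr ⟨Or.inr ⟨?_, ?_, ?_⟩, ?_⟩
    · rw [h, hfy]; omega
    · omega
    · omega
    · rintro (⟨h1, _⟩ | ⟨h1, _⟩) <;> omega
  · -- f z = r + 1: (x, z) is an inversion, neither pair with y is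
    refine Or.inl ⟨Or.inl ⟨?_, ?_, ?_⟩, ?_⟩
    · rw [h, hfx]; omega
    · omega
    · omega
    · rintro (⟨h1, _⟩ | ⟨h1, _⟩) <;> omega
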